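/- Let G = G₀ ⋉ U be an internal semidirect product with U normal, and let B be a maximal solvable subgroup of G. Then B₀ := B ∩ G₀ is a maximal solvable subgroup of G₀. -/

import Mathlib

theorem sup_solvable {G : Type*} [Group G] (C U : Subgroup G) [U.Normal]
    [Group.IsSolvable ↥U] [Group.IsSolvable ↥C] : Group.IsSolvable ↥(C ⊔ U) := by
  haveI : Group.IsSolvable (↥C ⧸ U.subgroupOf C) := inferInstance
  haveI : Group.IsSolvable (↥(C ⊔ U) ⧸ U.subgroupOf (C ⊔ U)) :=
    solvable_of_surjective
      (f := (QuotientGroup.quotientInfEquivProdNormalQuotient C U).toMonoidHom)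
      (QuotientGroup.quotientInfEquivProdNormalQuotient C U).surjective
  exact solvable_of_ker_le_range (Subgroup.inclusion (le_sup_right : U ≤ C ⊔ U))
    (QuotientGroup.mk' (U.subgroupOf (C ⊔ U))) (by
      intro x hx
      simp only [QuotientGroup.ker_mk'] at hx
      exact ⟨⟨x.1, hx⟩, rfl⟩)

/-- Let `G = G₀ ⋉ U` be an internal semidirect product with `U` a solvable normal
subgroup, and let `B` be a maximal solvable subgroup of `G`. Then `B₀ := B ∩ G₀` is a
maximal solvable subgroup of `G₀` (i.e. solvable, and not properly contained in any
solvable subgroup of `G₀`). -/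
theorem inf_reductive_part_of_maximal_solvable_is_maximal_solvable {G : Type*} [Group G]
    (G₀ U : Subgroup G) [U.Normal] [Group.IsSolvable ↥U]
    (hprod : ∀ g : G, ∃ g₀ ∈ G₀, ∃ u ∈ U, g = g₀ * u)
    (hint : G₀ ⊓ U = ⊥)
    (B : Subgroup G) [Group.IsSolvable ↥B]
    (hmax : ∀ C : Subgroup G, Group.IsSolvable ↥C → B ≤ C → B = C) :
    Group.IsSolvable ↥(B ⊓ G₀) ∧
      ∀ C : Subgroup G, C ≤ G₀ → Group.IsSolvable ↥C → B ⊓ G₀ ≤ C → B ⊓ G₀ = C := by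
  -- U is contained in B
  have hUB : U ≤ B := by
    have hsolv : Group.IsSolvable ↥(B ⊔ U) := sup_solvable B U
    have hBeq : B = B ⊔ U := hmax _ hsolv le_sup_left
    rw [hBeq]; exact le_sup_right
  constructor
  · exact solvable_of_solvable_injective
      (Subgroup.inclusion_injective (inf_le_left : B ⊓ G₀ ≤ B))
  · intro C hCG₀ hCsolv hBC
    haveI := hCsolv
    have hsolv : Group.IsSolvable ↥(C ⊔ U) := sup_solvable C U
    have hB_le : B ≤ C ⊔ U := by
      intro b hb
      obtain ⟨g₀, hg₀, u, hu, rfl⟩ := hprod b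
      have hg₀B : g₀ ∈ B := by
        have : g₀ * u * u⁻¹ ∈ B := B.mul_mem hb (B.inv_mem (hUB hu))
        simpa using this
      have : g₀ ∈ B ⊓ G₀ := ⟨hg₀B, hg₀⟩
      exact (C ⊔ U).mul_mem (Subgroup.mem_sup_left (hBC this)) (Subgroup.mem_sup_right hu)
    have hBeq : B = C ⊔ U := hmax _ hsolv hB_le
    refine le_antisymm hBC (fun c hc => ⟨?_, hCG₀ hc⟩)
    rw [hBeq]; exact Subgroup.mem_sup_left hc
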